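/- Let ω be a skew-symmetric bilinear form of rank ≥ 4 on a finite-dimensional real vector space V. Then the linear map from V* to Λ³V* given by γ ↦ ω ∧ γ is injective. -/
import Mathlib


/-- Let `ω` be a skew-symmetric bilinear form of rank ≥ 4 on a
finite-dimensional real vector space `V` (rank = rank of the associated musical map
`V → V*`).  Then the linear map `V* → Λ³V*`, `γ ↦ ω ∧ γ`, where
`(ω ∧ γ)(u,v,w) = ω(u,v)γ(w) - ω(u,w)γ(v) + ω(v,w)γ(u)`, is injective. -/
theorem stmt_2 (V : Type*) [AddCommGroup V] [Module ℝ V] [FiniteDimensional ℝ V]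
    (ω : V →ₗ[ℝ] V →ₗ[ℝ] ℝ)
    (halt : ∀ v, ω v v = 0)
    (hrank : 4 ≤ Module.finrank ℝ (LinearMap.range ω)) :
    ∀ γ : V →ₗ[ℝ] ℝ,
      (∀ u v w : V, ω u v * γ w - ω u w * γ v + ω v w * γ u = 0) → γ = 0 := by
  intro γ h
  by_contra hγ
  obtain ⟨w, hw⟩ : ∃ w, γ w ≠ 0 := by
    by_contra hc
    push_neg at hc
    exact hγ (LinearMap.ext hc)
  have skew : ∀ u v, ω u v = - ω v u := by
    intro u v
    have h1 := halt (u + v)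
    have h2 := halt u
    have h3 := halt v
    simp only [map_add, LinearMap.add_apply] at h1
    linarith
  have key : ∀ u, ω u = ((γ w)⁻¹ * γ u) • (ω w) + ((γ w)⁻¹ * (ω u w)) • γ := by
    intro u
    ext v
    have h1 := h u v w
    have h2 := skew v w
    simp only [LinearMap.add_apply, LinearMap.smul_apply, smul_eq_mul]
    field_simp
    have h3 : ω v w * γ u = -(ω w v * γ u) := by rw [h2]; ring
    linarith [h1, h3]
  have hsub : LinearMap.range ω ≤ Submodule.span ℝ {ω w, γ} := by
    rintro _ ⟨u, rfl⟩
    rw [key u]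
    exact Submodule.add_mem _
      (Submodule.smul_mem _ _ (Submodule.subset_span (by simp)))
      (Submodule.smul_mem _ _ (Submodule.subset_span (by simp)))
  have hmono := Submodule.finrank_mono hsub
  have hcard : Module.finrank ℝ
      (Submodule.span ℝ ({ω w, γ} : Set (V →ₗ[ℝ] ℝ))) ≤ 2 := by
    classical
    have heq : ({ω w, γ} : Set (V →ₗ[ℝ] ℝ)) = (({ω w, γ} : Finset (V →ₗ[ℝ] ℝ)) : Set _) := by
      simp
    rw [heq]
    exact (finrank_span_finset_le_card _).trans (by
      exact (Finset.card_insert_le _ _).trans (by simp))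
  omega
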